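/- Let G be a finite simple graph on p vertices with a universal vertex, and suppose additionally that the vertices of G can be labeled bijectively by {1, …, p} so that in the complement graph Ḡ any two adjacent vertices i, j satisfy i + j ≤ p. Then G satisfies: (1) for any two vertices u, v, d(u, v) ≤ 2; (2) for every n ≥ 2, the n-th power Gⁿ equals G²; and (3) the number q of edges of G satisfies q ≥ C(p,2) − Σ_{j=1}^{⌊p/2⌋}(p − 2j). -/

import Mathlib

/-- The `n`-th power of a graph `G`: two distinct vertices are adjacent iff their
distance in `G` is between 1 and `n`. -/
def SimpleGraph.powerGraph {V : Type*} (G : SimpleGraph V) (n : ℕ) : SimpleGraph V where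
  Adj u w := u ≠ w ∧ 1 ≤ G.dist u w ∧ G.dist u w ≤ n
  symm := by
    constructor
    intro u w h
    exact ⟨h.1.symm, by rw [SimpleGraph.dist_comm]; exact h.2.1,
      by rw [SimpleGraph.dist_comm]; exact h.2.2⟩
  loopless := by constructor; intro v h; exact h.1 rfl

/-- Necessary conditions for weight graphs: if a finite simple graph `G` on `p`
vertices has a universal vertex, and its vertices can be labeled bijectively by
`{1, …, p}` (via `Fin p`, vertex `i` carrying label `i + 1`) so that any two vertices
adjacent in the complement `Ḡ` have label-sum at most `p`, then: (1) any two vertices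
are at distance at most 2; (2) for every `n ≥ 2` the `n`-th power of `G` equals its
square; (3) `G` has at least `C(p,2) - ∑_{j=1}^{⌊p/2⌋} (p - 2j)` edges. -/
theorem weight_graph_necessary_conditions {V : Type*} [Fintype V] [DecidableEq V]
    (G : SimpleGraph V) [DecidableRel G.Adj] (p : ℕ) (hp : 1 ≤ p)
    (hcard : Fintype.card V = p)
    (v₀ : V) (huniv : ∀ w : V, w ≠ v₀ → G.Adj v₀ w)
    (hlabel : ∃ e : V ≃ Fin p, ∀ u v : V, Gᶜ.Adj u v →
      ((e u).val + 1) + ((e v).val + 1) ≤ p) :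
    (∀ u v : V, G.dist u v ≤ 2) ∧
      (∀ n : ℕ, 2 ≤ n → G.powerGraph n = G.powerGraph 2) ∧
      p.choose 2 - ∑ j ∈ Finset.Icc 1 (p / 2), (p - 2 * j) ≤ G.edgeFinset.card := by
  classical
  obtain ⟨e, he⟩ := hlabel
  -- (1) any two vertices are at distance at most 2
  have hdist : ∀ u v : V, G.dist u v ≤ 2 := by
    intro u v
    by_cases huv : u = v
    · subst huv; simp [SimpleGraph.dist_self]
    by_cases hu : u = v₀
    · subst hu
      have := SimpleGraph.dist_le ((huniv v (Ne.symm huv)).toWalk)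
      simp [SimpleGraph.Adj.toWalk] at this; omega
    by_cases hv : v = v₀
    · subst hv
      have := SimpleGraph.dist_le ((huniv u hu).symm.toWalk)
      simp [SimpleGraph.Adj.toWalk] at this; omega
    · have := SimpleGraph.dist_le
        (SimpleGraph.Walk.cons (huniv u hu).symm
          (SimpleGraph.Walk.cons (huniv v hv) SimpleGraph.Walk.nil))
      simpa using this
  refine ⟨hdist, ?_, ?_⟩
  -- (2) all powers `n ≥ 2` coincide with the square
  · intro n hn
    ext u w
    constructor
    · rintro ⟨h1, h2, h3⟩
      exact ⟨h1, h2, hdist u w⟩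
    · rintro ⟨h1, h2, h3⟩
      exact ⟨h1, h2, le_trans h3 hn⟩
  -- (3) the edge count bound
  · have htot : G.edgeFinset.card + Gᶜ.edgeFinset.card = p.choose 2 := by
      have hU : G.edgeFinset ∪ Gᶜ.edgeFinset = (⊤ : SimpleGraph V).edgeFinset := by
        ext s
        induction s using Sym2.ind with
        | _ u v =>
          simp only [Finset.mem_union, SimpleGraph.mem_edgeFinset, SimpleGraph.mem_edgeSet,
            SimpleGraph.compl_adj, SimpleGraph.top_adj]
          constructor
          · rintro (h | ⟨h, -⟩)
            · exact h.ne
            · exact h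
          · intro h
            by_cases hA : G.Adj u v
            · exact Or.inl hA
            · exact Or.inr ⟨h, hA⟩
      have hd : Disjoint G.edgeFinset Gᶜ.edgeFinset :=
        (SimpleGraph.disjoint_edgeFinset).mpr disjoint_compl_right
      rw [← Finset.card_union_of_disjoint hd, hU,
        SimpleGraph.card_edgeFinset_top_eq_card_choose_two, hcard]
    set T : Finset ((_ : ℕ) × ℕ) := (Finset.Icc 1 (p / 2)).sigma fun j => Finset.Ioc j (p - j)
      with hT
    have hTcard : T.card = ∑ j ∈ Finset.Icc 1 (p / 2), (p - 2 * j) := by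
      rw [hT, Finset.card_sigma]
      refine Finset.sum_congr rfl fun j hj => ?_
      rw [Nat.card_Ioc]
      omega
    set F : Sym2 V → (_ : ℕ) × ℕ := fun s =>
      Sym2.lift ⟨fun u v =>
          (⟨min (e u).val (e v).val + 1, max (e u).val (e v).val + 1⟩ : (_ : ℕ) × ℕ),
        fun u v => by simp [min_comm, max_comm]⟩ s with hF
    have hFmk : ∀ u v : V, F s(u, v) = ⟨min (e u).val (e v).val + 1, max (e u).val (e v).val + 1⟩ :=
      fun u v => rfl
    have hcompl : Gᶜ.edgeFinset.card ≤ T.card := by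
      apply Finset.card_le_card_of_injOn F
      · intro s hs
        rw [Finset.mem_coe, SimpleGraph.mem_edgeFinset] at hs; rw [Finset.mem_coe]
        induction s using Sym2.ind with
        | _ u v =>
          rw [SimpleGraph.mem_edgeSet] at hs
          have hsum := he u v hs
          have hne : (e u).val ≠ (e v).val := fun h => hs.ne (e.injective (Fin.val_injective h))
          rw [hFmk]
          simp only [hT, Finset.mem_sigma, Finset.mem_Icc, Finset.mem_Ioc]
          rcases le_total ((e u).val) ((e v).val) with h | h
          · rw [min_eq_left h, max_eq_right h]; omega
          · rw [min_eq_right h, max_eq_left h]; omega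
      · intro s₁ h₁ s₂ h₂ hEq
        clear h₁ h₂
        induction s₁ using Sym2.ind with
        | _ u v =>
          induction s₂ using Sym2.ind with
          | _ u' v' =>
            rw [hFmk, hFmk] at hEq
            obtain ⟨h1, h2⟩ := Sigma.mk.inj_iff.mp hEq
            rw [heq_iff_eq] at h2
            have hmin : min (e u).val (e v).val = min (e u').val (e v').val :=
              Nat.add_right_cancel h1
            have hmax : max (e u).val (e v).val = max (e u').val (e v').val :=
              Nat.add_right_cancel h2
            have key : ∀ {x y : V}, (e x).val = (e y).val → x = y :=
              fun h => e.injective (Fin.val_injective h)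
            rw [Sym2.eq_iff]
            rcases le_total ((e u).val) ((e v).val) with h | h <;>
              rcases le_total ((e u').val) ((e v').val) with h' | h'
            · rw [min_eq_left h, min_eq_left h'] at hmin
              rw [max_eq_right h, max_eq_right h'] at hmax
              exact Or.inl ⟨key hmin, key hmax⟩
            · rw [min_eq_left h, min_eq_right h'] at hmin
              rw [max_eq_right h, max_eq_left h'] at hmax
              exact Or.inr ⟨key hmin, key hmax⟩
            · rw [min_eq_right h, min_eq_left h'] at hmin
              rw [max_eq_left h, max_eq_right h'] at hmax
              exact Or.inr ⟨key hmax, key hmin⟩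
            · rw [min_eq_right h, min_eq_right h'] at hmin
              rw [max_eq_left h, max_eq_left h'] at hmax
              exact Or.inl ⟨key hmax, key hmin⟩
    rw [hTcard] at hcompl
    omega
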